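/- arXiv:2409.03903 — 3 statements merged into one kernel-verified Lean document; each statement's English description precedes it below -/
import Mathlib

section
/- Let k ≥ 1, d ≥ k and n ≥ d be integers. For all integers R ≥ R* > 0, if Γ(R,R*,n,d,k) is nonempty then Δ(R,R*,n,d,k) is nonempty; consequently δ(n,d,k) ≥ γ(n,d,k). -/
/-- `(Ψ, Φ)` is a `(q,p)`-alphabet reduction pair of arrays (ARPA) of strength `k`:
both arrays have `R` rows, `q` columns indexed by `Σ_q` and entries in `Σ_q`;
`Φ` contains at least one row equal to `(0, 1, ..., q-1)` (i.e. the identity);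
every row of `Ψ` takes at most `p` pairwise distinct values; and for every `k` pairwise
distinct columns and every `v ∈ Σ_q^k`, `Ψ` and `Φ` have the same number of rows whose
restriction to these columns equals `v`. -/
def IsARPA (q p k R : ℕ) (Ψ Φ : Fin R → Fin q → Fin q) : Prop :=
  (∃ r, ∀ j : Fin q, Φ r j = j) ∧
  (∀ r, (Finset.univ.image (Ψ r)).card ≤ p) ∧
  (∀ c : Fin k → Fin q, StrictMono c → ∀ v : Fin k → Fin q,
    (Finset.univ.filter fun r => ∀ s, Ψ r (c s) = v s).card =
      (Finset.univ.filter fun r => ∀ s, Φ r (c s) = v s).card)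

/-- `Γ(R, R*, q, p, k)` is nonempty: there is a `(q,p)`-ARPA of strength `k` with `R` rows
in which the row `(0, 1, ..., q-1)` occurs exactly `R*` times in `Φ`. -/
def GammaNonempty (R Rstar q p k : ℕ) : Prop :=
  ∃ Ψ Φ : Fin R → Fin q → Fin q, IsARPA q p k R Ψ Φ ∧
    (Finset.univ.filter fun r => ∀ j : Fin q, Φ r j = j).card = Rstar

/-- `γ(q,p,k)`: the supremum of `R*/R` over all integers `R ≥ R* > 0` such that
`Γ(R, R*, q, p, k)` is nonempty. -/
noncomputable def gammaARPA (q p k : ℕ) : ℝ :=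
  sSup {x : ℝ | ∃ R Rstar : ℕ, 0 < Rstar ∧ Rstar ≤ R ∧ GammaNonempty R Rstar q p k ∧
    x = (Rstar : ℝ) / R}

/-- `(Ψ, Φ)` is an `(n,d)`-cover pair of arrays (CPA) of strength `k`: both arrays have
`R` rows, `n` columns and Boolean entries; `Φ` contains at least one all-ones row; every
row of `Ψ` has at most `d` ones; and for every `k` pairwise distinct columns and every
`v ∈ {0,1}^k`, `Ψ` and `Φ` have the same number of rows whose restriction to these columns
equals `v`. -/
def IsCPA (n d k R : ℕ) (Ψ Φ : Fin R → Fin n → Bool) : Prop :=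
  (∃ r, ∀ j, Φ r j = true) ∧
  (∀ r, (Finset.univ.filter fun j => Ψ r j = true).card ≤ d) ∧
  (∀ c : Fin k → Fin n, StrictMono c → ∀ v : Fin k → Bool,
    (Finset.univ.filter fun r => ∀ s, Ψ r (c s) = v s).card =
      (Finset.univ.filter fun r => ∀ s, Φ r (c s) = v s).card)

/-- `Δ(R, R*, n, d, k)` is nonempty: there is an `(n,d)`-CPA of strength `k` with `R` rows
in which the all-ones row occurs exactly `R*` times in `Φ`. -/
def DeltaNonempty (R Rstar n d k : ℕ) : Prop :=
  ∃ Ψ Φ : Fin R → Fin n → Bool, IsCPA n d k R Ψ Φ ∧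
    (Finset.univ.filter fun r => ∀ j, Φ r j = true).card = Rstar

/-- `δ(n,d,k)`: the supremum of `R*/R` over all integers `R ≥ R* > 0` such that
`Δ(R, R*, n, d, k)` is nonempty. -/
noncomputable def deltaCPA (n d k : ℕ) : ℝ :=
  sSup {x : ℝ | ∃ R Rstar : ℕ, 0 < Rstar ∧ Rstar ≤ R ∧ DeltaNonempty R Rstar n d k ∧
    x = (Rstar : ℝ) / R}

open Finset in
lemma aux_card_arpa {R n k : ℕ} (A : Fin R → Fin n → Fin n) (c : Fin k → Fin n)
    (v : Fin k → Bool) :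
    (univ.filter fun r => ∀ s, (decide (A r (c s) = c s)) = v s).card =
      ∑ w ∈ (univ.filter fun w : Fin k → Fin n => ∀ s, (decide (w s = c s)) = v s),
        (univ.filter fun r => ∀ s, A r (c s) = w s).card := by
  rw [← Finset.card_biUnion]
  · congr 1
    ext r
    simp only [mem_biUnion, mem_filter, mem_univ, true_and]
    constructor
    · intro h
      exact ⟨fun s => A r (c s), fun s => h s, fun s => rfl⟩
    · rintro ⟨w, hw, hr⟩ s
      rw [hr s]; exact hw s
  · intro w hw w' hw' hne
    apply Finset.disjoint_left.mpr
    intro r hr hr'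
    simp only [mem_filter, mem_univ, true_and] at hr hr'
    exact hne (funext fun s => (hr s).symm.trans (hr' s))

/-- Let `k ≥ 1`, `d ≥ k` and `n ≥ d`. For all integers `R ≥ R* > 0`,
if `Γ(R,R*,n,d,k)` is nonempty then `Δ(R,R*,n,d,k)` is nonempty; consequently
`δ(n,d,k) ≥ γ(n,d,k)`. -/
theorem delta_ge_gamma (n d k : ℕ) (hk : 1 ≤ k) (hdk : k ≤ d) (hnd : d ≤ n) :
    (∀ R Rstar : ℕ, 0 < Rstar → Rstar ≤ R →
      GammaNonempty R Rstar n d k → DeltaNonempty R Rstar n d k) ∧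
    gammaARPA n d k ≤ deltaCPA n d k := by
  have part1 : ∀ R Rstar : ℕ, 0 < Rstar → Rstar ≤ R →
      GammaNonempty R Rstar n d k → DeltaNonempty R Rstar n d k := by
    rintro R Rstar hpos hle ⟨Ψ, Φ, ⟨⟨r0, hr0⟩, h2, h3⟩, hcount⟩
    refine ⟨fun r j => decide (Ψ r j = j), fun r j => decide (Φ r j = j),
      ⟨⟨r0, fun j => by simp [hr0 j]⟩, ?_, ?_⟩, ?_⟩
    · intro r
      calc (Finset.univ.filter fun j => decide (Ψ r j = j) = true).card
          ≤ (Finset.univ.image (Ψ r)).card := by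
            apply Finset.card_le_card_of_injOn (Ψ r)
            · intro j hj
              exact Finset.mem_image_of_mem _ (Finset.mem_univ j)
            · intro j hj j' hj' hjj'
              simp only [Finset.mem_coe, Finset.mem_filter, Finset.mem_univ, true_and,
                decide_eq_true_eq] at hj hj'
              rw [← hj, ← hj', hjj']
        _ ≤ d := h2 r
    · intro c hc v
      rw [aux_card_arpa, aux_card_arpa]
      exact Finset.sum_congr rfl fun w _ => h3 c hc w
    · rw [← hcount]
      congr 1
      ext r
      simp
  refine ⟨part1, ?_⟩
  have hdelta_nonneg : 0 ≤ deltaCPA n d k := by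
    apply Real.sSup_nonneg
    rintro x ⟨R, Rstar, h1, h2, h3, rfl⟩
    positivity
  apply Real.sSup_le _ hdelta_nonneg
  rintro x ⟨R, Rstar, h1, h2, h3, rfl⟩
  apply le_csSup
  · refine ⟨1, ?_⟩
    rintro y ⟨R', Rstar', h1', h2', h3', rfl⟩
    have hR' : (0:ℝ) < R' := by
      exact_mod_cast lt_of_lt_of_le h1' h2'
    rw [div_le_one hR']
    exact_mod_cast h2'
  · exact ⟨R, Rstar, h1, h2, part1 R Rstar h1 h2 h3, rfl⟩
end

section
/- Let q ≥ 2, k ≥ 2 and d ≥ k be integers, let I be a maximization instance of k CSP-q with n ≥ d variables and opt(I) ≠ wor(I), and let x ∈ Σ_q^n. Then (max_{y∈B^d(x)} v(I,y) − min_{y∈B^d(x)} v(I,y))/(opt(I) − wor(I)) ≥ δ̄(n,d,k)/(2 − δ̄(n,d,k)). Moreover, if m := ⌊n(q−1)/q⌋ ≥ d, then (max_{y∈B̃^d(x)} v(I,y) − min_{y∈B̃^d(x)} v(I,y))/(opt(I) − wor(I)) ≥ δ̄(m,d,k)/(2 − δ̄(m,d,k)). -/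
/-- An instance of the (maximization) problem `k CSP-q` with `n` variables:
`m` weighted constraints, where constraint `i` has positive weight `w i`,
arity `arity i ≤ k`, a strictly increasing tuple `idx i` of indices of the
variables it depends on, and a constraint function `P i : Σ_q^{arity i} → ℝ`. -/
structure CSPInstance (q k n : ℕ) where
  m : ℕ
  w : Fin m → ℝ
  w_pos : ∀ i, 0 < w i
  arity : Fin m → ℕ
  arity_le : ∀ i, arity i ≤ k
  idx : (i : Fin m) → Fin (arity i) → Fin n
  idx_mono : ∀ i, StrictMono (idx i)
  P : (i : Fin m) → ((Fin (arity i) → Fin q) → ℝ)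

namespace CSPInstance

variable {q k n : ℕ}

/-- The objective value `v(I, x)` of a solution `x ∈ Σ_q^n`. -/
def value (I : CSPInstance q k n) (x : Fin n → Fin q) : ℝ :=
  ∑ i : Fin I.m, I.w i * I.P i (fun s => x (I.idx i s))

/-- `opt(I)`, the best (maximum) objective value. -/
noncomputable def opt (I : CSPInstance q k n) : ℝ := sSup (Set.range I.value)

/-- `wor(I)`, the worst (minimum) objective value. -/
noncomputable def wor (I : CSPInstance q k n) : ℝ := sInf (Set.range I.value)

/-- `E[v(I,X)]`, the average objective value over all `q^n` solutions. -/
noncomputable def avg (I : CSPInstance q k n) : ℝ :=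
  (∑ x : Fin n → Fin q, I.value x) / (q : ℝ) ^ n

/-- A strong coloring of `I` with `ν` colors: an assignment of colors to variables such
that the support of each constraint meets each color class in at most one index. -/
def StrongColoring (I : CSPInstance q k n) (ν : ℕ) : Prop :=
  ∃ c : Fin n → Fin ν, ∀ i : Fin I.m, Function.Injective (fun s => c (I.idx i s))

end CSPInstance

/-- `Δ̄(R, R*, n, d, k)` is nonempty: there is an `(n,d)`-CPA of strength `k` with `R`
rows in which the all-ones row occurs exactly `R*` times in `Φ`, and in which every row
of both arrays contains either exactly `n` ones or at most `d` ones. -/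
def DeltaBarNonempty (R Rstar n d k : ℕ) : Prop :=
  ∃ Ψ Φ : Fin R → Fin n → Bool, IsCPA n d k R Ψ Φ ∧
    (Finset.univ.filter fun r => ∀ j, Φ r j = true).card = Rstar ∧
    (∀ r, (Finset.univ.filter fun j => Ψ r j = true).card = n ∨
      (Finset.univ.filter fun j => Ψ r j = true).card ≤ d) ∧
    (∀ r, (Finset.univ.filter fun j => Φ r j = true).card = n ∨
      (Finset.univ.filter fun j => Φ r j = true).card ≤ d)

/-- `δ̄(n,d,k)`: the supremum of `R*/R` over all integers `R ≥ R* > 0` such that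
`Δ̄(R, R*, n, d, k)` is nonempty. -/
noncomputable def deltaBarCPA (n d k : ℕ) : ℝ :=
  sSup {x : ℝ | ∃ R Rstar : ℕ, 0 < Rstar ∧ Rstar ≤ R ∧ DeltaBarNonempty R Rstar n d k ∧
    x = (Rstar : ℝ) / R}


lemma cpa_sum_eq {N d k R : ℕ} {Ψ Φ : Fin R → Fin N → Bool}
    (h : IsCPA N d k R Ψ Φ) (hkN : k ≤ N)
    (T : Finset (Fin N)) (hT : T.card ≤ k)
    (G : (Fin N → Bool) → ℝ)
    (hG : ∀ r r' : Fin N → Bool, (∀ j ∈ T, r j = r' j) → G r = G r') :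
    ∑ r : Fin R, G (Ψ r) = ∑ r : Fin R, G (Φ r) := by
  obtain ⟨T', hTT', hT'⟩ := Finset.exists_superset_card_eq hT (by simpa using hkN)
  have e := T'.orderIsoOfFin hT'
  set c : Fin k → Fin N := fun s => (e s : Fin N) with hc
  have hcmono : StrictMono c := fun a b hab => by
    exact (Subtype.coe_lt_coe.mpr (e.strictMono hab))
  -- canonical representative for each pattern
  set w : (Fin k → Bool) → (Fin N → Bool) :=
    fun v j => if h : j ∈ T' then v (e.symm ⟨j, h⟩) else false with hw
  have key : ∀ (A : Fin R → Fin N → Bool),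
      ∑ r : Fin R, G (A r) =
        ∑ v : Fin k → Bool,
          ((Finset.univ.filter fun r => ∀ s, A r (c s) = v s).card : ℝ) * G (w v) := by
    intro A
    rw [← Finset.sum_fiberwise_of_maps_to (g := fun r => fun s => A r (c s))
      (t := Finset.univ) (fun r _ => Finset.mem_univ _) (fun r => G (A r))]
    refine Finset.sum_congr rfl fun v _ => ?_
    rw [Finset.sum_congr rfl (fun r hr => ?_), Finset.sum_const, nsmul_eq_mul]
    · have hfil : (Finset.univ.filter fun i : Fin R => (fun s => A i (c s)) = v) =
          Finset.univ.filter fun r => ∀ s, A r (c s) = v s :=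
        Finset.filter_congr (fun r _ => funext_iff)
      rw [hfil]
    · simp only [Finset.mem_filter, funext_iff] at hr
      refine hG _ _ fun j hj => ?_
      have hjT' : j ∈ T' := hTT' hj
      have hcj : c (e.symm ⟨j, hjT'⟩) = j := by simp [hc]
      have h1 : A r j = v (e.symm ⟨j, hjT'⟩) := by
        have := hr.2 (e.symm ⟨j, hjT'⟩); rwa [hcj] at this
      have h2 : w v j = v (e.symm ⟨j, hjT'⟩) := by simp [hw, hjT']
      rw [h1, h2]
  rw [key Ψ, key Φ]
  refine Finset.sum_congr rfl fun v _ => ?_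
  rw [h.2.2 c hcmono v]

section Key
variable {q k n N d R Rstar : ℕ}

/-- solution induced by a row -/
def solRow (b t : Fin n → Fin q) (σ : Fin n → Option (Fin N)) (row : Fin N → Bool) :
    Fin n → Fin q :=
  fun j => match σ j with
  | none => b j
  | some c => if row c then t j else b j

lemma solRow_all_true (b t : Fin n → Fin q) (σ : Fin n → Option (Fin N))
    (hnone : ∀ j, σ j = none → b j = t j) (row : Fin N → Bool)
    (hrow : ∀ c, row c = true) : solRow b t σ row = t := by
  funext j
  unfold solRow
  cases hσ : σ j with
  | none => exact hnone j hσ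
  | some c => simp [hrow c]

lemma solRow_dist (hN : 0 < N) (b t : Fin n → Fin q) (σ : Fin n → Option (Fin N))
    (hinj : ∀ j j' c, σ j = some c → σ j' = some c → j = j') (row : Fin N → Bool)
    (hrow : (Finset.univ.filter fun c => row c = true).card ≤ d) :
    hammingDist b (solRow b t σ row) ≤ d := by
  classical
  have hsub : ∀ j ∈ (Finset.univ.filter fun j => b j ≠ solRow b t σ row j),
      ∃ c, σ j = some c ∧ row c = true := by
    intro j hj
    simp only [Finset.mem_filter] at hj
    have hj2 := hj.2
    unfold solRow at hj2
    rcases hσ : σ j with _ | c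
    · rw [hσ] at hj2; exact absurd rfl hj2
    · rw [hσ] at hj2
      by_cases hc : row c = true
      · exact ⟨c, rfl, hc⟩
      · simp [hc] at hj2
  have key : (Finset.univ.filter fun j => b j ≠ solRow b t σ row j).card ≤
      (Finset.univ.filter fun c => row c = true).card := by
    apply Finset.card_le_card_of_injOn (fun j => (σ j).getD ⟨0, hN⟩)
    · intro j hj
      obtain ⟨c, hc, hrc⟩ := hsub j hj
      simp [hc, hrc]
    · intro j hj j' hj' hEq
      obtain ⟨c, hc, _⟩ := hsub j hj
      obtain ⟨c', hc', _⟩ := hsub j' hj'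
      simp only [hc, hc', Option.getD_some] at hEq
      exact hinj j j' c hc (hEq ▸ hc')
  exact le_trans key hrow

/-- The two sums of values over Ψ-rows and Φ-rows coincide. -/
lemma solRow_sum_eq {Ψ Φ : Fin R → Fin N → Bool} (hCPA : IsCPA N d k R Ψ Φ)
    (hkN : k ≤ N) (hN : 0 < N)
    (I : CSPInstance q k n) (b t : Fin n → Fin q) (σ : Fin n → Option (Fin N)) :
    ∑ r : Fin R, I.value (solRow b t σ (Ψ r)) =
      ∑ r : Fin R, I.value (solRow b t σ (Φ r)) := by
  classical
  unfold CSPInstance.value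
  rw [Finset.sum_comm]
  conv_rhs => rw [Finset.sum_comm]
  refine Finset.sum_congr rfl fun i _ => ?_
  set T : Finset (Fin N) :=
    Finset.univ.image (fun s : Fin (I.arity i) => (σ (I.idx i s)).getD ⟨0, hN⟩) with hT
  have hTcard : T.card ≤ k := by
    refine le_trans (Finset.card_image_le) ?_
    simpa using I.arity_le i
  exact cpa_sum_eq hCPA hkN T hTcard
    (fun row => I.w i * I.P i (fun s => solRow b t σ row (I.idx i s)))
    (by
      intro r r' hrr'
      refine congrArg (fun z => I.w i * I.P i z) (funext fun s => ?_)
      show solRow b t σ r (I.idx i s) = solRow b t σ r' (I.idx i s)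
      unfold solRow
      rcases hσ : σ (I.idx i s) with _ | c
      · rfl
      · have hcT : c ∈ T := by
          rw [hT]
          refine Finset.mem_image.mpr ⟨s, Finset.mem_univ _, ?_⟩
          simp [hσ]
        simp only [hrr' c hcT])
end Key

lemma deltaBar_ineq {q k n N d R Rstar : ℕ}
    (h : DeltaBarNonempty R Rstar N d k) (hkN : k ≤ N) (hN : 0 < N)
    (I : CSPInstance q k n) (b t : Fin n → Fin q) (σ : Fin n → Option (Fin N))
    (hinj : ∀ j j' c, σ j = some c → σ j' = some c → j = j')
    (hnone : ∀ j, σ j = none → b j = t j)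
    (M μ : ℝ) (hM : ∀ y, hammingDist b y ≤ d → I.value y ≤ M)
    (hμ : ∀ y, hammingDist b y ≤ d → μ ≤ I.value y) :
    (Rstar : ℝ) * I.value t + ((R : ℝ) - Rstar) * μ ≤ R * M ∧
      (R : ℝ) * μ ≤ (Rstar : ℝ) * I.value t + ((R : ℝ) - Rstar) * M := by
  classical
  obtain ⟨Ψ, Φ, hCPA, hstar, hΨbar, hΦbar⟩ := h
  have hsum := solRow_sum_eq hCPA hkN hN I b t σ
  set p : Fin R → Prop := fun r => ∀ j, Φ r j = true with hp
  have hA : (Finset.univ.filter p).card = Rstar := hstar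
  have hA' : (Finset.univ.filter fun r => ¬ p r).card = R - Rstar := by
    have := Finset.card_filter_add_card_filter_not (s := Finset.univ) p
    simp only [Finset.card_univ, Fintype.card_fin] at this
    omega
  have hRstarR : Rstar ≤ R := by
    rw [← hA]
    exact le_trans (Finset.card_filter_le _ _) (by simp)
  -- each Ψ-row solution is in the ball
  have hΨball : ∀ r, hammingDist b (solRow b t σ (Ψ r)) ≤ d :=
    fun r => solRow_dist hN b t σ hinj (Ψ r) (hCPA.2.1 r)
  -- Φ-row solutions: all-ones rows give t, others are in the ball
  have hΦsplit : ∀ r, ¬ p r → hammingDist b (solRow b t σ (Φ r)) ≤ d := by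
    intro r hr
    refine solRow_dist hN b t σ hinj (Φ r) ?_
    rcases hΦbar r with hc | hc
    · exfalso
      apply hr
      intro j
      have : (Finset.univ.filter fun j => Φ r j = true) = Finset.univ :=
        Finset.eq_univ_of_card _ (by simpa using hc)
      have := Finset.mem_filter.mp (this ▸ Finset.mem_univ j)
      exact this.2
    · exact hc
  have hΦt : ∀ r, p r → solRow b t σ (Φ r) = t :=
    fun r hr => solRow_all_true b t σ hnone (Φ r) hr
  -- decompose the Φ-sum
  have hdecomp : ∑ r : Fin R, I.value (solRow b t σ (Φ r)) =
      (Rstar : ℝ) * I.value t +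
        ∑ r ∈ Finset.univ.filter fun r => ¬ p r, I.value (solRow b t σ (Φ r)) := by
    rw [← Finset.sum_filter_add_sum_filter_not Finset.univ p]
    congr 1
    rw [Finset.sum_congr rfl (fun r hr => by
      rw [hΦt r (Finset.mem_filter.mp hr).2]), Finset.sum_const, hA, nsmul_eq_mul]
  have hcastsub : ((R - Rstar : ℕ) : ℝ) = (R : ℝ) - Rstar := by
    push_cast [Nat.cast_sub hRstarR]; ring
  constructor
  · -- Rstar * v t + (R - Rstar) * μ ≤ R * M
    have h1 : ∑ r : Fin R, I.value (solRow b t σ (Ψ r)) ≤ (R : ℝ) * M := by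
      calc ∑ r : Fin R, I.value (solRow b t σ (Ψ r))
          ≤ ∑ _r : Fin R, M := Finset.sum_le_sum fun r _ => hM _ (hΨball r)
        _ = (R : ℝ) * M := by simp [mul_comm]
    have h2 : (Rstar : ℝ) * I.value t + ((R : ℝ) - Rstar) * μ ≤
        ∑ r : Fin R, I.value (solRow b t σ (Φ r)) := by
      rw [hdecomp]
      have : ((R : ℝ) - Rstar) * μ ≤
          ∑ r ∈ Finset.univ.filter fun r => ¬ p r, I.value (solRow b t σ (Φ r)) := by
        calc ((R : ℝ) - Rstar) * μ
            = ((R - Rstar : ℕ) : ℝ) * μ := by rw [hcastsub]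
          _ = (Finset.univ.filter fun r => ¬ p r).card • μ := by rw [hA', nsmul_eq_mul]
          _ ≤ _ := Finset.card_nsmul_le_sum _ _ _
              (fun r hr => hμ _ (hΦsplit r (Finset.mem_filter.mp hr).2))
      linarith
    linarith [hsum]
  · -- R * μ ≤ Rstar * v t + (R - Rstar) * M
    have h1 : (R : ℝ) * μ ≤ ∑ r : Fin R, I.value (solRow b t σ (Ψ r)) := by
      calc (R : ℝ) * μ = ∑ _r : Fin R, μ := by simp [mul_comm]
        _ ≤ _ := Finset.sum_le_sum fun r _ => hμ _ (hΨball r)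
    have h2 : ∑ r : Fin R, I.value (solRow b t σ (Φ r)) ≤
        (Rstar : ℝ) * I.value t + ((R : ℝ) - Rstar) * M := by
      rw [hdecomp]
      have : ∑ r ∈ Finset.univ.filter fun r => ¬ p r, I.value (solRow b t σ (Φ r)) ≤
          ((R : ℝ) - Rstar) * M := by
        calc ∑ r ∈ Finset.univ.filter fun r => ¬ p r, I.value (solRow b t σ (Φ r))
            ≤ ∑ _r ∈ Finset.univ.filter fun r => ¬ p r, M :=
              Finset.sum_le_sum fun r hr => hM _ (hΦsplit r (Finset.mem_filter.mp hr).2)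
          _ = ((R : ℝ) - Rstar) * M := by
              rw [Finset.sum_const, hA', nsmul_eq_mul, hcastsub]
      linarith
    linarith [hsum]

lemma ratio_bound (G D : ℝ) (hG : 0 < G) (hD : 0 ≤ D) (S : Set ℝ)
    (hS : ∀ ρ ∈ S, ρ * (G + D) ≤ 2 * D) : sSup S / (2 - sSup S) ≤ D / G := by
  have hGD : 0 < G + D := by linarith
  set β : ℝ := 2 * D / (G + D) with hβ
  have hβnn : 0 ≤ β := by positivity
  have hβ2 : β < 2 := by
    rw [hβ, div_lt_iff₀ hGD]; linarith
  have hub : ∀ ρ ∈ S, ρ ≤ β := fun ρ h => (le_div_iff₀ hGD).mpr (hS ρ h)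
  have hδβ : sSup S ≤ β := by
    rcases S.eq_empty_or_nonempty with hS0 | hS0
    · rw [hS0, Real.sSup_empty]; exact hβnn
    · exact csSup_le hS0 hub
  have hδ2 : sSup S < 2 := lt_of_le_of_lt hδβ hβ2
  rw [div_le_div_iff₀ (by linarith) hG]
  have h1 : sSup S * (G + D) ≤ 2 * D := by
    calc sSup S * (G + D) ≤ β * (G + D) := by
          apply mul_le_mul_of_nonneg_right hδβ (le_of_lt hGD)
      _ = 2 * D := by rw [hβ, div_mul_cancel₀ _ (ne_of_gt hGD)]
  nlinarith
lemma exists_good_shift {q n : ℕ} [NeZero q] (hq0 : 0 < q) (hn : 0 < n)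
    (x t : Fin n → Fin q) :
    ∃ a : Fin q, (Finset.univ.filter fun j => x j + a ≠ t j).card ≤ n * (q - 1) / q := by
  classical
  set g : Fin n → Fin q := fun j => t j - x j with hg
  have hsum : ∑ a : Fin q, (Finset.univ.filter fun j => g j = a).card = n := by
    rw [← Finset.card_eq_sum_card_fiberwise (t := Finset.univ) (fun j _ => Finset.mem_univ (g j))]
    simp
  have hex : ∃ a : Fin q, n ≤ q * (Finset.univ.filter fun j => g j = a).card := by
    by_contra hcon
    push_neg at hcon
    have : ∑ a : Fin q, q * (Finset.univ.filter fun j => g j = a).card ≤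
        ∑ _a : Fin q, (n - 1) := Finset.sum_le_sum fun a _ => by have := hcon a; omega
    rw [← Finset.mul_sum, hsum] at this
    simp only [Finset.sum_const, Finset.card_univ, Fintype.card_fin, smul_eq_mul] at this
    have h2 : q * (n - 1) < q * n := by
      have hlt : n - 1 < n := by omega
      exact Nat.mul_lt_mul_of_le_of_lt (le_refl q) hlt hq0
    omega
  obtain ⟨a, ha⟩ := hex
  refine ⟨a, ?_⟩
  set c := (Finset.univ.filter fun j => g j = a).card with hc
  have heq : (Finset.univ.filter fun j => x j + a ≠ t j).card = n - c := by
    have hiff : ∀ j : Fin n, g j = a ↔ x j + a = t j := by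
      intro j
      rw [hg]
      constructor
      · intro h
        have h' : t j - x j = a := h
        rw [← h']
        exact add_sub_cancel (x j) (t j)
      · intro h
        show t j - x j = a
        rw [← h]
        exact add_sub_cancel_left (x j) a
    have h1 : (Finset.univ.filter fun j => x j + a ≠ t j) =
        (Finset.univ.filter fun j => ¬ (g j = a)) := by
      apply Finset.filter_congr
      intro j _
      rw [hiff j]
    have h2 := Finset.card_filter_add_card_filter_not
      (s := (Finset.univ : Finset (Fin n))) (fun j => g j = a)
    rw [h1]
    simp only [Finset.card_univ, Fintype.card_fin] at h2
    omega
  rw [heq]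
  rw [Nat.le_div_iff_mul_le hq0]
  rcases le_or_gt n c with hnc | hnc
  · simp [Nat.sub_eq_zero_of_le hnc]
  · have e1 : (n - c) * q = n * q - c * q := Nat.sub_mul n c q
    have hcq : n ≤ c * q := by rw [mul_comm]; exact ha
    rw [e1, Nat.mul_sub, mul_one]
    omega

lemma exists_sigma {q n m : ℕ} [NeZero q] (hq0 : 0 < q) (hn : 0 < n)
    (hm : n * (q - 1) / q ≤ m) (x t : Fin n → Fin q) :
    ∃ (a : Fin q) (σ : Fin n → Option (Fin m)),
      (∀ j j' c, σ j = some c → σ j' = some c → j = j') ∧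
      (∀ j, σ j = none → x j + a = t j) := by
  classical
  obtain ⟨a, ha⟩ := exists_good_shift hq0 hn x t
  set S : Finset (Fin n) := Finset.univ.filter fun j => x j + a ≠ t j with hSdef
  have hS : S.card ≤ m := le_trans ha hm
  set e := S.orderIsoOfFin rfl
  refine ⟨a, fun j => if h : j ∈ S then some (Fin.castLE hS (e.symm ⟨j, h⟩)) else none, ?_, ?_⟩
  · intro j j' c h1 h2
    by_cases hj : j ∈ S
    swap
    · simp [hj] at h1
    by_cases hj' : j' ∈ S
    swap
    · simp [hj'] at h2
    simp only [dif_pos hj] at h1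
    simp only [dif_pos hj'] at h2
    injection h1 with h1
    injection h2 with h2
    have hval := congrArg Fin.val (h1.trans h2.symm)
    have h3 : e.symm ⟨j, hj⟩ = e.symm ⟨j', hj'⟩ := Fin.ext hval
    have h4 := e.symm.injective h3
    exact congrArg Subtype.val h4
  · intro j hj
    by_cases h : j ∈ S
    · simp [dif_pos h] at hj
    · have : ¬ (x j + a ≠ t j) := fun hne => h (Finset.mem_filter.mpr ⟨Finset.mem_univ _, hne⟩)
      exact not_not.mp this

/-- Let `q ≥ 2`, `k ≥ 2`, `d ≥ k`, let `I` be a maximization instance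
of `k CSP-q` with `n ≥ d` variables and `opt(I) ≠ wor(I)`, and let `x ∈ Σ_q^n`. Then
`(max_{y∈B^d(x)} v(I,y) − min_{y∈B^d(x)} v(I,y)) / (opt(I) − wor(I)) ≥ δ̄(n,d,k)/(2 − δ̄(n,d,k))`;
moreover, if `m := ⌊n(q−1)/q⌋ ≥ d`, then the analogous bound with `δ̄(m,d,k)` holds over
`B̃^d(x) = ∪_{a∈Σ_q} B^d(x + a·𝟏)`. -/
theorem hamming_ball_diameter_apx
    (q k d n : ℕ) (hq : 2 ≤ q) (hk : 2 ≤ k) (hdk : k ≤ d) (hnd : d ≤ n)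
    (I : CSPInstance q k n) (hne : I.opt ≠ I.wor) (x : Fin n → Fin q) :
    (deltaBarCPA n d k / (2 - deltaBarCPA n d k) ≤
      (sSup {v : ℝ | ∃ y : Fin n → Fin q, hammingDist x y ≤ d ∧ v = I.value y} -
        sInf {v : ℝ | ∃ y : Fin n → Fin q, hammingDist x y ≤ d ∧ v = I.value y}) /
        (I.opt - I.wor)) ∧
    (d ≤ n * (q - 1) / q →
      deltaBarCPA (n * (q - 1) / q) d k / (2 - deltaBarCPA (n * (q - 1) / q) d k) ≤
        (sSup {v : ℝ | ∃ y : Fin n → Fin q,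
            (∃ a : Fin q, hammingDist (fun j => x j + a) y ≤ d) ∧ v = I.value y} -
          sInf {v : ℝ | ∃ y : Fin n → Fin q,
            (∃ a : Fin q, hammingDist (fun j => x j + a) y ≤ d) ∧ v = I.value y}) /
          (I.opt - I.wor)) := by
  classical
  have hq0 : 0 < q := by omega
  haveI : NeZero q := ⟨by omega⟩
  haveI : Nonempty (Fin q) := ⟨⟨0, hq0⟩⟩
  have hN : 0 < n := by omega
  have hfin : (Set.range I.value).Finite := Set.finite_range _
  have hrne : (Set.range I.value).Nonempty := Set.range_nonempty _
  obtain ⟨yopt, hyopt⟩ := hrne.csSup_mem hfin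
  obtain ⟨ywor, hywor⟩ := hrne.csInf_mem hfin
  have hyopt' : I.value yopt = I.opt := hyopt
  have hywor' : I.value ywor = I.wor := hywor
  have hge : ∀ y, I.wor ≤ I.value y := fun y => csInf_le hfin.bddBelow (Set.mem_range_self y)
  have hwle : I.wor ≤ I.opt := hyopt' ▸ hge yopt
  have hG : 0 < I.opt - I.wor := sub_pos.mpr (lt_of_le_of_ne hwle (Ne.symm hne))
  constructor
  · -- Part 1: plain Hamming ball
    set V : Set ℝ := {v | ∃ y, hammingDist x y ≤ d ∧ v = I.value y} with hV
    have hVsub : V ⊆ Set.range I.value := by rintro v ⟨y, _, rfl⟩; exact Set.mem_range_self y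
    have hVfin := hfin.subset hVsub
    have hMb : ∀ y, hammingDist x y ≤ d → I.value y ≤ sSup V :=
      fun y hy => le_csSup hVfin.bddAbove ⟨y, hy, rfl⟩
    have hμb : ∀ y, hammingDist x y ≤ d → sInf V ≤ I.value y :=
      fun y hy => csInf_le hVfin.bddBelow ⟨y, hy, rfl⟩
    have hxball : hammingDist x x ≤ d := by simp [hammingDist_self]
    have hD : 0 ≤ sSup V - sInf V := by
      have := hMb x hxball; have := hμb x hxball; linarith
    have hkN : k ≤ n := le_trans hdk hnd
    have hρ : ∀ ρ ∈ {ρ : ℝ | ∃ R Rstar : ℕ, 0 < Rstar ∧ Rstar ≤ R ∧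
          DeltaBarNonempty R Rstar n d k ∧ ρ = (Rstar : ℝ) / R},
        ρ * ((I.opt - I.wor) + (sSup V - sInf V)) ≤ 2 * (sSup V - sInf V) := by
      rintro ρ ⟨R, Rstar, hR0, hRR, hΔ, rfl⟩
      have hinj : ∀ j j' c : Fin n, (some j : Option (Fin n)) = some c →
          (some j' : Option (Fin n)) = some c → j = j' := by
        intro j j' c h1 h2; cases h1; cases h2; rfl
      have hnone : ∀ j : Fin n, (some j : Option (Fin n)) = none → x j = yopt j := by
        intro j h; cases h
      have hnone' : ∀ j : Fin n, (some j : Option (Fin n)) = none → x j = ywor j := by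
        intro j h; cases h
      have h1 := (deltaBar_ineq hΔ hkN hN I x yopt (fun j => some j) hinj hnone
        (sSup V) (sInf V) hMb hμb).1
      have h2 := (deltaBar_ineq hΔ hkN hN I x ywor (fun j => some j) hinj hnone'
        (sSup V) (sInf V) hMb hμb).2
      rw [hyopt'] at h1
      rw [hywor'] at h2
      have hRpos : (0 : ℝ) < R := by exact_mod_cast lt_of_lt_of_le hR0 hRR
      rw [div_mul_eq_mul_div, div_le_iff₀ hRpos]
      nlinarith
    exact ratio_bound _ _ hG hD _ hρ
  · -- Part 2: union of shifted Hamming balls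
    intro hdm
    set V : Set ℝ := {v | ∃ y, (∃ a : Fin q, hammingDist (fun j => x j + a) y ≤ d) ∧
      v = I.value y} with hV
    have hVsub : V ⊆ Set.range I.value := by rintro v ⟨y, _, rfl⟩; exact Set.mem_range_self y
    have hVfin := hfin.subset hVsub
    have hMb : ∀ (a : Fin q) (y : Fin n → Fin q),
        hammingDist (fun j => x j + a) y ≤ d → I.value y ≤ sSup V :=
      fun a y hy => le_csSup hVfin.bddAbove ⟨y, ⟨a, hy⟩, rfl⟩
    have hμb : ∀ (a : Fin q) (y : Fin n → Fin q),
        hammingDist (fun j => x j + a) y ≤ d → sInf V ≤ I.value y :=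
      fun a y hy => csInf_le hVfin.bddBelow ⟨y, ⟨a, hy⟩, rfl⟩
    have hx0 : hammingDist (fun j => x j + (0 : Fin q)) x ≤ d := by
      have h0 : (fun j => x j + (0 : Fin q)) = x := funext fun j => add_zero _
      rw [h0]
      simp [hammingDist_self]
    have hD : 0 ≤ sSup V - sInf V := by
      have := hMb 0 x hx0; have := hμb 0 x hx0; linarith
    have hkm : k ≤ n * (q - 1) / q := le_trans hdk hdm
    have hm0 : 0 < n * (q - 1) / q := by omega
    have hρ : ∀ ρ ∈ {ρ : ℝ | ∃ R Rstar : ℕ, 0 < Rstar ∧ Rstar ≤ R ∧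
          DeltaBarNonempty R Rstar (n * (q - 1) / q) d k ∧ ρ = (Rstar : ℝ) / R},
        ρ * ((I.opt - I.wor) + (sSup V - sInf V)) ≤ 2 * (sSup V - sInf V) := by
      rintro ρ ⟨R, Rstar, hR0, hRR, hΔ, rfl⟩
      obtain ⟨a, σ, hinj, hnone⟩ :=
        exists_sigma (m := n * (q - 1) / q) hq0 hN (le_refl _) x yopt
      obtain ⟨a', σ', hinj', hnone'⟩ :=
        exists_sigma (m := n * (q - 1) / q) hq0 hN (le_refl _) x ywor
      have h1 := (deltaBar_ineq hΔ hkm hm0 I (fun j => x j + a) yopt σ hinj hnone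
        (sSup V) (sInf V) (hMb a) (hμb a)).1
      have h2 := (deltaBar_ineq hΔ hkm hm0 I (fun j => x j + a') ywor σ' hinj' hnone'
        (sSup V) (sInf V) (hMb a') (hμb a')).2
      rw [hyopt'] at h1
      rw [hywor'] at h2
      have hRpos : (0 : ℝ) < R := by exact_mod_cast lt_of_lt_of_le hR0 hRR
      rw [div_mul_eq_mul_div, div_le_iff₀ hRpos]
      nlinarith
    exact ratio_bound _ _ hG hD _ hρ
end

section
/- Let q ≥ 2 and k ≥ 2 be integers, let I be an instance of k CSP-q with n variables, and let x, x* ∈ Σ_q^n with Hamming distance d_H(x,x*) = κ > k. For h ∈ {0,...,κ}, let N^h(x*,x) denote the set of vectors y ∈ Σ_q^n such that y_j ∈ {x_j, x*_j} for every j ∈ {1,...,n} and d_H(x,y) = h (so every such y agrees with x at all positions where x and x* agree, N^0(x*,x) = {x} and N^κ(x*,x) = {x*}). Then v(I,x*) = Σ_{h=0}^{k} (−1)^{k−h}·C(κ−1−h, k−h)·Σ_{y ∈ N^h(x*,x)} v(I,y). -/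
/-! ### Auxiliary binomial identities via power series -/

private lemma aux_coeff_one_add_X_pow (n j : ℕ) :
    (PowerSeries.coeff j) ((1 + PowerSeries.X) ^ n) = (n.choose j : ℝ) := by
  have h : ((1 + Polynomial.X : Polynomial ℝ) : PowerSeries ℝ) = 1 + PowerSeries.X := by
    simp
  rw [← h, ← Polynomial.coe_pow, Polynomial.coeff_coe, Polynomial.coeff_one_add_X_pow]

private lemma aux_master (M d b : ℕ) :
    ∑ p ∈ Finset.HasAntidiagonal.antidiagonal b,
      ((-1 : ℝ) ^ p.1 * ((M + p.1).choose M : ℝ) * ((M + 1 + d).choose p.2 : ℝ))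
      = (d.choose b : ℝ) := by
  have base := PowerSeries.mk_add_choose_mul_one_sub_pow_eq_one ℝ M
  have hres := congrArg (PowerSeries.rescale (-1 : ℝ)) base
  rw [map_mul, map_one, map_pow, map_sub, map_one, PowerSeries.rescale_neg_one_X,
    sub_neg_eq_add, PowerSeries.rescale_mk] at hres
  have key : (PowerSeries.mk fun n : ℕ => (-1 : ℝ) ^ n * ((M + n).choose M : ℝ)) *
      (1 + PowerSeries.X) ^ (M + 1 + d) = (1 + PowerSeries.X) ^ d := by
    rw [pow_add, ← mul_assoc, hres, one_mul]
  have hco := congrArg (PowerSeries.coeff b) key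
  rw [PowerSeries.coeff_mul, aux_coeff_one_add_X_pow] at hco
  rw [← hco]
  apply Finset.sum_congr rfl
  intro p hp
  rw [PowerSeries.coeff_mk, aux_coeff_one_add_X_pow, mul_assoc]

private lemma aux_master_range (M d b : ℕ) :
    ∑ j ∈ Finset.range (b + 1),
      ((-1 : ℝ) ^ j * ((M + j).choose j : ℝ) * ((M + 1 + d).choose (b - j) : ℝ))
      = (d.choose b : ℝ) := by
  rw [← aux_master M d b, ← Finset.Nat.sum_antidiagonal_eq_sum_range_succ
      (f := fun i j => (-1 : ℝ) ^ i * ((M + i).choose i : ℝ) * ((M + 1 + d).choose j : ℝ))]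
  apply Finset.sum_congr rfl
  intro p hp
  have h : (M + p.1).choose p.1 = (M + p.1).choose M := by
    rw [← Nat.choose_symm (Nat.le_add_left _ _)]
    congr 1
    omega
  rw [h]

private lemma aux_coeffId (κ k t a : ℕ) (ha : a ≤ t) (ht : t ≤ k) (hkκ : k < κ) :
    ∑ h ∈ Finset.range (k + 1),
      (-1 : ℝ) ^ (k - h) * ((κ - 1 - h).choose (k - h) : ℝ) *
        (if a ≤ h then (((κ - t).choose (h - a) : ℕ) : ℝ) else 0)
      = if a = t then 1 else 0 := by
  have hsplit : ∑ h ∈ Finset.range (k + 1),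
      (-1 : ℝ) ^ (k - h) * ((κ - 1 - h).choose (k - h) : ℝ) *
        (if a ≤ h then (((κ - t).choose (h - a) : ℕ) : ℝ) else 0)
      = ∑ h ∈ Finset.Ico a (k + 1),
      (-1 : ℝ) ^ (k - h) * ((κ - 1 - h).choose (k - h) : ℝ) *
        (((κ - t).choose (h - a) : ℕ) : ℝ) := by
    rw [Finset.range_eq_Ico, ← Finset.sum_Ico_consecutive _ (Nat.zero_le a) (by omega)]
    have h0 : ∑ h ∈ Finset.Ico 0 a,
        (-1 : ℝ) ^ (k - h) * ((κ - 1 - h).choose (k - h) : ℝ) *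
          (if a ≤ h then (((κ - t).choose (h - a) : ℕ) : ℝ) else 0) = 0 := by
      apply Finset.sum_eq_zero
      intro h hh
      rw [Finset.mem_Ico] at hh
      rw [if_neg (by omega), mul_zero]
    rw [h0, zero_add]
    apply Finset.sum_congr rfl
    intro h hh
    rw [Finset.mem_Ico] at hh
    rw [if_pos hh.1]
  rw [hsplit, Finset.sum_Ico_eq_sum_range]
  have hb : k + 1 - a = (k - a) + 1 := by omega
  rw [hb, ← Finset.sum_range_reflect]
  have hcongr : ∀ j ∈ Finset.range (k - a + 1),
      (-1 : ℝ) ^ (k - (a + (k - a + 1 - 1 - j))) *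
        ((κ - 1 - (a + (k - a + 1 - 1 - j))).choose (k - (a + (k - a + 1 - 1 - j))) : ℝ) *
        (((κ - t).choose (a + (k - a + 1 - 1 - j) - a) : ℕ) : ℝ)
      = (-1 : ℝ) ^ j * (((κ - 1 - k) + j).choose j : ℝ) *
        ((((κ - 1 - k) + 1 + (k - t)).choose ((k - a) - j) : ℕ) : ℝ) := by
    intro j hj
    rw [Finset.mem_range] at hj
    have e1 : k - (a + (k - a + 1 - 1 - j)) = j := by omega
    have e2 : κ - 1 - (a + (k - a + 1 - 1 - j)) = κ - 1 - k + j := by omega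
    have e3 : a + (k - a + 1 - 1 - j) - a = k - a - j := by omega
    have e4 : κ - t = κ - 1 - k + 1 + (k - t) := by omega
    rw [e1, e2, e3, e4]
  rw [Finset.sum_congr rfl hcongr, aux_master_range]
  by_cases hat : a = t
  · subst hat
    simp
  · rw [if_neg hat, Nat.choose_eq_zero_of_lt (by omega), Nat.cast_zero]

/-! ### The combinatorial machinery -/

/-- Replace `x` by `xstar` on the coordinates in `S`. -/
private def Yfun {q n : ℕ} (x xstar : Fin n → Fin q) (S : Finset (Fin n)) : Fin n → Fin q :=
  fun j => if j ∈ S then xstar j else x j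

private lemma aux_filter_Yfun {q n : ℕ} (x xstar : Fin n → Fin q) (S : Finset (Fin n))
    (hS : S ⊆ Finset.univ.filter fun j => x j ≠ xstar j) :
    (Finset.univ.filter fun j => x j ≠ Yfun x xstar S j) = S := by
  ext j
  simp only [Finset.mem_filter, Finset.mem_univ, true_and, Yfun]
  by_cases hj : j ∈ S
  · have hmem := hS hj
    rw [Finset.mem_filter] at hmem
    simp [hj, hmem.2]
  · simp [hj]

private lemma aux_sum_N {q n : ℕ} (x xstar : Fin n → Fin q) (f : (Fin n → Fin q) → ℝ) (h : ℕ) :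
    ∑ y ∈ Finset.univ.filter (fun y : Fin n → Fin q =>
        (∀ j, y j = x j ∨ y j = xstar j) ∧ hammingDist x y = h), f y
    = ∑ S ∈ (Finset.univ.filter fun j => x j ≠ xstar j).powersetCard h,
        f (Yfun x xstar S) := by
  have hdist : ∀ y : Fin n → Fin q,
      hammingDist x y = (Finset.univ.filter fun j => x j ≠ y j).card := fun _ => rfl
  apply Finset.sum_bij'
    (i := fun y _ => Finset.univ.filter fun j => x j ≠ y j)
    (j := fun S _ => Yfun x xstar S)
  · intro y hy
    rw [Finset.mem_filter] at hy
    obtain ⟨-, hdisj, hh⟩ := hy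
    rw [Finset.mem_powersetCard]
    constructor
    · intro j hj
      rw [Finset.mem_filter] at hj ⊢
      refine ⟨Finset.mem_univ _, ?_⟩
      rcases hdisj j with h1 | h1
      · exact absurd h1.symm hj.2
      · rw [← h1]; exact hj.2
    · rw [← hdist]; exact hh
  · intro S hS
    rw [Finset.mem_powersetCard] at hS
    rw [Finset.mem_filter]
    refine ⟨Finset.mem_univ _, ?_, ?_⟩
    · intro j
      by_cases hj : j ∈ S
      · right; simp [Yfun, hj]
      · left; simp [Yfun, hj]
    · rw [hdist, aux_filter_Yfun x xstar S hS.1, hS.2]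
  · intro y hy
    rw [Finset.mem_filter] at hy
    funext j
    simp only [Yfun, Finset.mem_filter, Finset.mem_univ, true_and]
    by_cases hj : x j = y j
    · simp [hj]
    · rcases hy.2.1 j with h1 | h1
      · exact absurd h1.symm hj
      · simp [hj, h1.symm]
  · intro S hS
    rw [Finset.mem_powersetCard] at hS
    exact aux_filter_Yfun x xstar S hS.1
  · intro y hy
    rw [Finset.mem_filter] at hy
    congr 1
    funext j
    simp only [Yfun, Finset.mem_filter, Finset.mem_univ, true_and]
    by_cases hj : x j = y j
    · simp [hj]
    · rcases hy.2.1 j with h1 | h1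
      · exact absurd h1.symm hj
      · rw [h1]
        by_cases h2 : x j = xstar j <;> simp [h2]

private lemma aux_count_fiber {n : ℕ} (D T A : Finset (Fin n)) (hT : T ⊆ D) (hA : A ⊆ T)
    (h : ℕ) :
    ((D.powersetCard h).filter fun S => S ∩ T = A).card
      = if A.card ≤ h then (D.card - T.card).choose (h - A.card) else 0 := by
  by_cases hah : A.card ≤ h
  · rw [if_pos hah]
    have hbij : ((D.powersetCard h).filter fun S => S ∩ T = A).card
        = ((D \ T).powersetCard (h - A.card)).card := by
      apply Finset.card_bij' (i := fun S _ => S \ T) (j := fun B _ => A ∪ B)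
      · intro S hS
        rw [Finset.mem_filter, Finset.mem_powersetCard] at hS
        obtain ⟨⟨hSD, hScard⟩, hSA⟩ := hS
        rw [Finset.mem_powersetCard]
        constructor
        · exact Finset.sdiff_subset_sdiff hSD (le_refl T)
        · have := Finset.card_inter_add_card_sdiff S T
          rw [hSA] at this
          omega
      · intro B hB
        rw [Finset.mem_powersetCard] at hB
        obtain ⟨hBsub, hBcard⟩ := hB
        have hBT : ∀ j ∈ B, j ∉ T := by
          intro j hj
          have := hBsub hj
          rw [Finset.mem_sdiff] at this
          exact this.2
        have hdisj : Disjoint A B := by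
          rw [Finset.disjoint_left]
          intro j hjA hjB
          exact hBT j hjB (hA hjA)
        rw [Finset.mem_filter, Finset.mem_powersetCard]
        refine ⟨⟨?_, ?_⟩, ?_⟩
        · intro j hj
          rcases Finset.mem_union.mp hj with h1 | h1
          · exact hT (hA h1)
          · exact (Finset.mem_sdiff.mp (hBsub h1)).1
        · rw [Finset.card_union_of_disjoint hdisj, hBcard]
          omega
        · ext j
          simp only [Finset.mem_inter, Finset.mem_union]
          constructor
          · rintro ⟨h1 | h1, h2⟩
            · exact h1
            · exact absurd h2 (hBT j h1)
          · intro hj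
            exact ⟨Or.inl hj, hA hj⟩
      · intro S hS
        rw [Finset.mem_filter, Finset.mem_powersetCard] at hS
        obtain ⟨⟨hSD, hScard⟩, hSA⟩ := hS
        ext j
        simp only [Finset.mem_union, Finset.mem_sdiff]
        constructor
        · rintro (h1 | h1)
          · rw [← hSA] at h1; exact (Finset.mem_inter.mp h1).1
          · exact h1.1
        · intro hj
          by_cases hjT : j ∈ T
          · left; rw [← hSA]; exact Finset.mem_inter.mpr ⟨hj, hjT⟩
          · right; exact ⟨hj, hjT⟩
      · intro B hB
        rw [Finset.mem_powersetCard] at hB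
        obtain ⟨hBsub, hBcard⟩ := hB
        ext j
        simp only [Finset.mem_sdiff, Finset.mem_union]
        constructor
        · rintro ⟨h1 | h1, h2⟩
          · exact absurd (hA h1) h2
          · exact h1
        · intro hj
          exact ⟨Or.inr hj, (Finset.mem_sdiff.mp (hBsub hj)).2⟩
    rw [hbij, Finset.card_powersetCard, Finset.card_sdiff_of_subset hT]
  · rw [if_neg hah]
    rw [Finset.card_eq_zero, Finset.filter_eq_empty_iff]
    intro S hS
    rw [Finset.mem_powersetCard] at hS
    intro hSA
    have : A.card ≤ S.card := by
      rw [← hSA]; exact Finset.card_le_card Finset.inter_subset_left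
    omega

private lemma aux_key_lemma {q n : ℕ} (x xstar : Fin n → Fin q) (κ k : ℕ) (hkκ : k < κ)
    (hD : (Finset.univ.filter fun j => x j ≠ xstar j).card = κ)
    (f : (Fin n → Fin q) → ℝ) (T : Finset (Fin n))
    (hTD : T ⊆ Finset.univ.filter fun j => x j ≠ xstar j) (htk : T.card ≤ k)
    (hf : ∀ S ⊆ (Finset.univ.filter fun j => x j ≠ xstar j),
      f (Yfun x xstar S) = f (Yfun x xstar (S ∩ T))) :
    f xstar = ∑ h ∈ Finset.range (k + 1),
      (-1 : ℝ) ^ (k - h) * ((κ - 1 - h).choose (k - h) : ℝ) *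
        ∑ S ∈ (Finset.univ.filter fun j => x j ≠ xstar j).powersetCard h,
          f (Yfun x xstar S) := by
  set D := Finset.univ.filter fun j => x j ≠ xstar j with hDdef
  have step1 : ∀ h : ℕ, ∑ S ∈ D.powersetCard h, f (Yfun x xstar S)
      = ∑ A ∈ T.powerset,
          ((((D.powersetCard h).filter fun S => S ∩ T = A).card : ℝ)) *
            f (Yfun x xstar A) := by
    intro h
    have maps : ∀ S ∈ D.powersetCard h, S ∩ T ∈ T.powerset := by
      intro S _
      rw [Finset.mem_powerset]
      exact Finset.inter_subset_right
    calc ∑ S ∈ D.powersetCard h, f (Yfun x xstar S)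
        = ∑ S ∈ D.powersetCard h, f (Yfun x xstar (S ∩ T)) :=
          Finset.sum_congr rfl fun S hS => hf S (Finset.mem_powersetCard.mp hS).1
      _ = ∑ A ∈ T.powerset, ∑ S ∈ (D.powersetCard h).filter (fun S => S ∩ T = A),
            f (Yfun x xstar A) :=
          (Finset.sum_fiberwise_of_maps_to' maps (fun A => f (Yfun x xstar A))).symm
      _ = _ := Finset.sum_congr rfl fun A _ => by
            rw [Finset.sum_const, nsmul_eq_mul]
  have coefficient : ∀ A ∈ T.powerset,
      (∑ h ∈ Finset.range (k + 1),
        (-1 : ℝ) ^ (k - h) * ((κ - 1 - h).choose (k - h) : ℝ) *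
          ((((D.powersetCard h).filter fun S => S ∩ T = A).card : ℝ)))
      = if A = T then 1 else 0 := by
    intro A hA
    rw [Finset.mem_powerset] at hA
    have hcards : A.card ≤ T.card := Finset.card_le_card hA
    have hAT : (A.card = T.card) ↔ A = T :=
      ⟨fun hc => Finset.eq_of_subset_of_card_le hA (le_of_eq hc.symm),
       fun hc => by rw [hc]⟩
    rw [← if_congr hAT rfl rfl,
      ← aux_coeffId κ k T.card A.card hcards htk hkκ]
    apply Finset.sum_congr rfl
    intro h _
    congr 1
    rw [aux_count_fiber D T A hTD hA h, hD]
    split <;> simp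
  have hYT : f xstar = f (Yfun x xstar T) := by
    have h1 : Yfun x xstar D = xstar := by
      funext j
      simp only [Yfun]
      by_cases hj : j ∈ D
      · simp [hj]
      · have hxj : x j = xstar j := by
          by_contra hne
          exact hj (Finset.mem_filter.mpr ⟨Finset.mem_univ _, hne⟩)
        simp [hj, hxj]
    have h2 := hf D (Finset.Subset.refl D)
    rw [Finset.inter_eq_right.mpr hTD] at h2
    conv_lhs => rw [← h1]
    exact h2
  rw [hYT]
  calc f (Yfun x xstar T)
      = ∑ A ∈ T.powerset, (if A = T then (1 : ℝ) else 0) * f (Yfun x xstar A) := by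
        simp only [ite_mul, one_mul, zero_mul]
        rw [Finset.sum_ite_eq' T.powerset T (fun A => f (Yfun x xstar A)),
          if_pos (Finset.mem_powerset.mpr (Finset.Subset.refl T))]
    _ = ∑ A ∈ T.powerset,
          (∑ h ∈ Finset.range (k + 1),
            (-1 : ℝ) ^ (k - h) * ((κ - 1 - h).choose (k - h) : ℝ) *
              ((((D.powersetCard h).filter fun S => S ∩ T = A).card : ℝ)))
            * f (Yfun x xstar A) :=
        Finset.sum_congr rfl fun A hA => by rw [coefficient A hA]
    _ = ∑ A ∈ T.powerset, ∑ h ∈ Finset.range (k + 1),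
          (-1 : ℝ) ^ (k - h) * ((κ - 1 - h).choose (k - h) : ℝ) *
            ((((D.powersetCard h).filter fun S => S ∩ T = A).card : ℝ))
            * f (Yfun x xstar A) :=
        Finset.sum_congr rfl fun A _ => Finset.sum_mul _ _ _
    _ = ∑ h ∈ Finset.range (k + 1), ∑ A ∈ T.powerset,
          (-1 : ℝ) ^ (k - h) * ((κ - 1 - h).choose (k - h) : ℝ) *
            ((((D.powersetCard h).filter fun S => S ∩ T = A).card : ℝ))
            * f (Yfun x xstar A) := Finset.sum_comm
    _ = _ := by
        apply Finset.sum_congr rfl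
        intro h _
        rw [step1 h, Finset.mul_sum]
        exact Finset.sum_congr rfl fun A _ => mul_assoc _ _ _



/-- Let `q ≥ 2`, `k ≥ 2`, let `I` be an instance of `k CSP-q` with `n`
variables, and let `x, x* ∈ Σ_q^n` with Hamming distance `d_H(x, x*) = κ > k`. For
`h ∈ {0, ..., κ}`, `N^h(x*,x)` denotes the set of `y ∈ Σ_q^n` such that
`y j ∈ {x j, x* j}` for every `j` and `d_H(x, y) = h`. Then
`v(I,x*) = Σ_{h=0}^{k} (−1)^{k−h}·C(κ−1−h, k−h)·Σ_{y ∈ N^h(x*,x)} v(I,y)`. -/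
theorem value_as_combination_over_ball
    (q k n κ : ℕ) (hq : 2 ≤ q) (hk : 2 ≤ k)
    (I : CSPInstance q k n) (x xstar : Fin n → Fin q)
    (hκ : hammingDist x xstar = κ) (hkκ : k < κ) :
    I.value xstar =
      ∑ h ∈ Finset.range (k + 1),
        (-1 : ℝ) ^ (k - h) * (Nat.choose (κ - 1 - h) (k - h) : ℝ) *
          ∑ y ∈ Finset.univ.filter (fun y : Fin n → Fin q =>
              (∀ j, y j = x j ∨ y j = xstar j) ∧ hammingDist x y = h),
            I.value y := by
  set D := Finset.univ.filter fun j => x j ≠ xstar j with hDdef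
  have hD : D.card = κ := hκ
  have main_i : ∀ i : Fin I.m,
      I.P i (fun s => xstar (I.idx i s)) =
        ∑ h ∈ Finset.range (k + 1),
          (-1 : ℝ) ^ (k - h) * ((κ - 1 - h).choose (k - h) : ℝ) *
            ∑ S ∈ D.powersetCard h, I.P i (fun s => Yfun x xstar S (I.idx i s)) := by
    intro i
    apply aux_key_lemma x xstar κ k hkκ hD (fun y => I.P i (fun s => y (I.idx i s)))
      (D ∩ Finset.univ.image (I.idx i))
    · exact Finset.inter_subset_left
    · calc (D ∩ Finset.univ.image (I.idx i)).card
          ≤ (Finset.univ.image (I.idx i)).card :=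
            Finset.card_le_card Finset.inter_subset_right
        _ ≤ (Finset.univ : Finset (Fin (I.arity i))).card := Finset.card_image_le
        _ = I.arity i := by simp
        _ ≤ k := I.arity_le i
    · intro S hS
      congr 1
      funext s
      have hjimg : I.idx i s ∈ Finset.univ.image (I.idx i) :=
        Finset.mem_image_of_mem _ (Finset.mem_univ s)
      by_cases hjS : I.idx i s ∈ S
      · have hjT : I.idx i s ∈ S ∩ (D ∩ Finset.univ.image (I.idx i)) :=
          Finset.mem_inter.mpr ⟨hjS, Finset.mem_inter.mpr ⟨hS hjS, hjimg⟩⟩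
        simp [Yfun, hjS, hjT]
      · have hjT : I.idx i s ∉ S ∩ (D ∩ Finset.univ.image (I.idx i)) :=
          fun hc => hjS (Finset.mem_inter.mp hc).1
        simp [Yfun, hjS, hjT]
  calc I.value xstar
      = ∑ i : Fin I.m, I.w i * I.P i (fun s => xstar (I.idx i s)) := rfl
    _ = ∑ i : Fin I.m, I.w i *
          ∑ h ∈ Finset.range (k + 1),
            (-1 : ℝ) ^ (k - h) * ((κ - 1 - h).choose (k - h) : ℝ) *
              ∑ S ∈ D.powersetCard h, I.P i (fun s => Yfun x xstar S (I.idx i s)) :=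
        Finset.sum_congr rfl fun i _ => by rw [main_i i]
    _ = ∑ i : Fin I.m, ∑ h ∈ Finset.range (k + 1), I.w i *
          ((-1 : ℝ) ^ (k - h) * ((κ - 1 - h).choose (k - h) : ℝ) *
              ∑ S ∈ D.powersetCard h, I.P i (fun s => Yfun x xstar S (I.idx i s))) :=
        Finset.sum_congr rfl fun i _ => Finset.mul_sum _ _ _
    _ = ∑ h ∈ Finset.range (k + 1), ∑ i : Fin I.m, I.w i *
          ((-1 : ℝ) ^ (k - h) * ((κ - 1 - h).choose (k - h) : ℝ) *
              ∑ S ∈ D.powersetCard h, I.P i (fun s => Yfun x xstar S (I.idx i s))) :=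
        Finset.sum_comm
    _ = ∑ h ∈ Finset.range (k + 1),
          (-1 : ℝ) ^ (k - h) * ((κ - 1 - h).choose (k - h) : ℝ) *
            ∑ S ∈ D.powersetCard h, I.value (Yfun x xstar S) := by
        apply Finset.sum_congr rfl
        intro h _
        calc ∑ i : Fin I.m, I.w i *
              ((-1 : ℝ) ^ (k - h) * ((κ - 1 - h).choose (k - h) : ℝ) *
                ∑ S ∈ D.powersetCard h, I.P i (fun s => Yfun x xstar S (I.idx i s)))
            = ∑ i : Fin I.m,
                (-1 : ℝ) ^ (k - h) * ((κ - 1 - h).choose (k - h) : ℝ) *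
                  ∑ S ∈ D.powersetCard h,
                    I.w i * I.P i (fun s => Yfun x xstar S (I.idx i s)) := by
              apply Finset.sum_congr rfl
              intro i _
              rw [mul_left_comm, Finset.mul_sum]
          _ = (-1 : ℝ) ^ (k - h) * ((κ - 1 - h).choose (k - h) : ℝ) *
                ∑ i : Fin I.m, ∑ S ∈ D.powersetCard h,
                  I.w i * I.P i (fun s => Yfun x xstar S (I.idx i s)) :=
              (Finset.mul_sum _ _ _).symm
          _ = (-1 : ℝ) ^ (k - h) * ((κ - 1 - h).choose (k - h) : ℝ) *
                ∑ S ∈ D.powersetCard h, ∑ i : Fin I.m,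
                  I.w i * I.P i (fun s => Yfun x xstar S (I.idx i s)) := by
              rw [Finset.sum_comm]
          _ = _ := rfl
    _ = _ := by
        apply Finset.sum_congr rfl
        intro h _
        rw [aux_sum_N x xstar I.value h]
end
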